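/- arXiv:2305.02654 — 3 statements merged into one kernel-verified Lean document; each statement's English description precedes it below -/
import Mathlib

section
/- Let 𝔤₁,…,𝔤ₙ be real Lie algebras and 𝔤 = 𝔤₁ ⊕ ⋯ ⊕ 𝔤ₙ their direct product, with natural inclusions ιⱼ : 𝔤ⱼ → 𝔤 and projections πⱼ : 𝔤 → 𝔤ⱼ. If J : 𝔤 → 𝔤 is an integrable almost complex structure (J² = −id and N_J ≡ 0), then for every j with 1 ≤ j ≤ n the linear endomorphism Fⱼ = πⱼ ∘ J ∘ ιⱼ : 𝔤ⱼ → 𝔤ⱼ is torsion free, i.e. N_{Fⱼ} ≡ 0. -/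
open scoped DirectSum

lemma lie_of_left_aux {n : ℕ} (L : Fin n → Type*)
    [∀ i, LieRing (L i)] [∀ i, LieAlgebra ℝ (L i)] (j : Fin n) (X : L j)
    (Z : ⨁ i, L i) : ⁅DirectSum.of L j X, Z⁆ = DirectSum.of L j ⁅X, Z j⁆ := by
  refine DFinsupp.ext fun i => ?_
  rw [DirectSum.bracket_apply]
  rcases eq_or_ne i j with rfl | h
  · simp
  · rw [DirectSum.of_eq_of_ne _ _ _ h, DirectSum.of_eq_of_ne _ _ _ h, zero_lie]

lemma lie_of_right_aux {n : ℕ} (L : Fin n → Type*)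
    [∀ i, LieRing (L i)] [∀ i, LieAlgebra ℝ (L i)] (j : Fin n) (Y : L j)
    (Z : ⨁ i, L i) : ⁅Z, DirectSum.of L j Y⁆ = DirectSum.of L j ⁅Z j, Y⁆ := by
  refine DFinsupp.ext fun i => ?_
  rw [DirectSum.bracket_apply]
  rcases eq_or_ne i j with rfl | h
  · simp
  · rw [DirectSum.of_eq_of_ne _ _ _ h, DirectSum.of_eq_of_ne _ _ _ h, lie_zero]

/-- If J is an integrable almost complex structure on a direct product of Lie algebras,
then the induced endomorphism F_j = π_j ∘ J ∘ ι_j on each summand is torsion free. -/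
theorem statement4 {n : ℕ} (L : Fin n → Type*)
    [∀ i, LieRing (L i)] [∀ i, LieAlgebra ℝ (L i)]
    (J : (⨁ i, L i) →ₗ[ℝ] ⨁ i, L i)
    (hJ : ∀ X, J (J X) = -X)
    (hint : ∀ X Y : ⨁ i, L i, ⁅J X, J Y⁆ - J ⁅X, J Y⁆ - J ⁅J X, Y⁆ - ⁅X, Y⁆ = 0)
    (j : Fin n) :
    ∀ X Y : L j,
      ⁅J (DirectSum.of L j X) j, J (DirectSum.of L j Y) j⁆
        - J (DirectSum.of L j ⁅X, J (DirectSum.of L j Y) j⁆) j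
        - J (DirectSum.of L j ⁅J (DirectSum.of L j X) j, Y⁆) j
        - ⁅X, Y⁆ = 0 := by
  intro X Y
  have h := hint (DirectSum.of L j X) (DirectSum.of L j Y)
  have h2 := congrArg (fun Z : ⨁ i, L i => Z j) h
  simp only [DirectSum.sub_apply, DirectSum.zero_apply, DirectSum.bracket_apply,
    lie_of_left_aux L j X, lie_of_right_aux L j Y,
    DirectSum.lie_of_same, DirectSum.of_eq_same] at h2
  convert h2 using 3
end

section
/- Let sl(2,ℝ) be the 3-dimensional real Lie algebra with basis e₁,e₂,e₃ and brackets [e₁,e₂] = e₃, [e₁,e₃] = e₂, [e₂,e₃] = −e₁. For any real numbers A, B, C, λ, μ, τ, the linear endomorphism F of sl(2,ℝ) determined by F(e₁) = λe₁ + Ae₂ − Be₃, F(e₂) = Ae₁ + μe₂ − Ce₃, F(e₃) = Be₁ + Ce₂ + τe₃ is not torsion free; that is, there exist X, Y ∈ sl(2,ℝ) with N_F(X,Y) ≠ 0. -/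
lemma comb_zero3 {g : Type*} [AddCommGroup g] [Module ℝ g]
    (e : Module.Basis (Fin 3) ℝ g) {a b c : ℝ}
    (h : a • e 0 + b • e 1 + c • e 2 = 0) : a = 0 ∧ b = 0 ∧ c = 0 := by
  have hli := e.linearIndependent
  rw [Fintype.linearIndependent_iff] at hli
  have := hli ![a, b, c] (by simpa [Fin.sum_univ_three] using h)
  exact ⟨this 0, this 1, this 2⟩

set_option maxHeartbeats 1000000 in
/-- No endomorphism of sl(2,ℝ) of the stated symmetric-type shape is torsion free. -/
theorem statement5 (g : Type*) [LieRing g] [LieAlgebra ℝ g]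
    (e : Module.Basis (Fin 3) ℝ g)
    (h12 : ⁅e 0, e 1⁆ = e 2) (h13 : ⁅e 0, e 2⁆ = e 1) (h23 : ⁅e 1, e 2⁆ = -(e 0))
    (A B C lam μ τ : ℝ) (F : g →ₗ[ℝ] g)
    (hF1 : F (e 0) = lam • e 0 + A • e 1 - B • e 2)
    (hF2 : F (e 1) = A • e 0 + μ • e 1 - C • e 2)
    (hF3 : F (e 2) = B • e 0 + C • e 1 + τ • e 2) :
    ∃ X Y : g, ⁅F X, F Y⁆ - F ⁅X, F Y⁆ - F ⁅F X, Y⁆ - ⁅X, Y⁆ ≠ 0 := by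
  by_contra hcon
  push_neg at hcon
  have b21 : ⁅e 1, e 0⁆ = -(e 2) := by rw [← lie_skew, h12]
  have b31 : ⁅e 2, e 0⁆ = -(e 1) := by rw [← lie_skew, h13]
  have b32 : ⁅e 2, e 1⁆ = e 0 := by rw [← lie_skew, h23, neg_neg]
  have key : ∀ X Y : g, ⁅F X, F Y⁆ - F ⁅X, F Y⁆ - F ⁅F X, Y⁆ - ⁅X, Y⁆ = 0 := hcon
  -- N(e0, e1)
  have hN01 := key (e 0) (e 1)
  have hN02 := key (e 0) (e 2)
  have hN12 := key (e 1) (e 2)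
  simp only [hF1, hF2, hF3, lie_add, add_lie, lie_sub, sub_lie, lie_smul, smul_lie,
    lie_self, lie_neg, neg_lie, map_add, map_sub, map_neg, map_smul, map_zero, smul_neg, neg_smul,
    smul_zero, smul_add, smul_sub, smul_smul, h12, h13, h23, b21, b31, b32] at hN01 hN02 hN12
  have e01 : (2*A*C - 2*B*μ) • e 0 + (2*A*B - 2*C*lam) • e 1
      + (lam*μ - lam*τ - μ*τ - 1 - A^2 - B^2 - C^2) • e 2 = 0 := by
    rw [← hN01]; module
  have e02 : (-2*B*C - 2*A*τ) • e 0 + (lam*τ - lam*μ - μ*τ - 1 + A^2 + B^2 - C^2) • e 1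
      + (2*C*lam - 2*A*B) • e 2 = 0 := by
    rw [← hN02]; module
  have e12 : (lam*τ + lam*μ - μ*τ + 1 - A^2 + B^2 - C^2) • e 0 + (2*B*C + 2*A*τ) • e 1
      + (2*A*C - 2*B*μ) • e 2 = 0 := by
    rw [← hN12]; module
  obtain ⟨q1, q2, q3⟩ := comb_zero3 e e01
  obtain ⟨q4, q5, q6⟩ := comb_zero3 e e02
  obtain ⟨q7, q8, _⟩ := comb_zero3 e e12
  -- scalar contradictions
  have hμτ : μ * τ = -1 - C^2 := by linarith
  have hlm : lam * μ = A^2 - 1 := by linarith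
  have hlt : lam * τ = -1 - B^2 := by linarith
  have hBC : B * C = 0 := by
    have h1 : A * C = B * μ := by linarith
    have h2 : A * B = C * lam := by linarith
    linear_combination (A*B)*h1 + (B*μ)*h2 + (B*C)*hlm
  have hAt : A * τ = 0 := by linarith [q4, hBC]
  have hprod : lam * μ * τ^2 = (1 + B^2) * (1 + C^2) := by
    linear_combination (μ*τ)*hlt + (-1-B^2)*hμτ
  rcases mul_eq_zero.mp hAt with hA | hτ
  · subst hA
    nlinarith [hprod, hlm, sq_nonneg τ, sq_nonneg B, sq_nonneg C, sq_nonneg (B*C)]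
  · subst hτ
    nlinarith [hlt, sq_nonneg B]
end

section
/- Let so(3) be the 3-dimensional real Lie algebra with basis e₁,e₂,e₃ and brackets [e₁,e₂] = −e₃, [e₁,e₃] = e₂, [e₂,e₃] = −e₁. For any real numbers A, B, C, λ, μ, τ, the linear endomorphism F of so(3) determined by F(e₁) = λe₁ + Ae₂ + Be₃, F(e₂) = Ae₁ + μe₂ + Ce₃, F(e₃) = Be₁ + Ce₂ + τe₃ is not torsion free; that is, there exist X, Y ∈ so(3) with N_F(X,Y) ≠ 0. -/
/-- No endomorphism of so(3) of the stated symmetric shape is torsion free. -/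
theorem statement6 (g : Type*) [LieRing g] [LieAlgebra ℝ g]
    (e : Module.Basis (Fin 3) ℝ g)
    (h12 : ⁅e 0, e 1⁆ = -(e 2)) (h13 : ⁅e 0, e 2⁆ = e 1) (h23 : ⁅e 1, e 2⁆ = -(e 0))
    (A B C lam μ τ : ℝ) (F : g →ₗ[ℝ] g)
    (hF1 : F (e 0) = lam • e 0 + A • e 1 + B • e 2)
    (hF2 : F (e 1) = A • e 0 + μ • e 1 + C • e 2)
    (hF3 : F (e 2) = B • e 0 + C • e 1 + τ • e 2) :
    ∃ X Y : g, ⁅F X, F Y⁆ - F ⁅X, F Y⁆ - F ⁅F X, Y⁆ - ⁅X, Y⁆ ≠ 0 := by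
  by_contra hcon
  push_neg at hcon
  have h21 : ⁅e 1, e 0⁆ = e 2 := by rw [← lie_skew, h12]; simp
  have h31 : ⁅e 2, e 0⁆ = -(e 1) := by rw [← lie_skew, h13]
  have h32 : ⁅e 2, e 1⁆ = e 0 := by rw [← lie_skew, h23]; simp
  have h11 : ⁅e 0, e 0⁆ = 0 := lie_self _
  have h22 : ⁅e 1, e 1⁆ = 0 := lie_self _
  have h33 : ⁅e 2, e 2⁆ = 0 := lie_self _
  -- linear independence extractor
  have key : ∀ a b c : ℝ, a • e 0 + b • e 1 + c • e 2 = 0 → a = 0 ∧ b = 0 ∧ c = 0 := by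
    intro a b c h
    have hli := Fintype.linearIndependent_iff.mp e.linearIndependent ![a, b, c]
    have hsum : ∑ i, (![a, b, c] i) • e i = 0 := by
      rw [Fin.sum_univ_three]; simpa using h
    exact ⟨hli hsum 0, hli hsum 1, hli hsum 2⟩
  have E01 := hcon (e 0) (e 1)
  have E02 := hcon (e 0) (e 2)
  have E12 := hcon (e 1) (e 2)
  rw [hF1, hF2] at E01
  rw [hF1, hF3] at E02
  rw [hF2, hF3] at E12
  simp only [lie_add, add_lie, lie_smul, smul_lie, map_add, map_smul, map_neg,
    h11, h22, h33, h12, h13, h23, h21, h31, h32, hF1, hF2, hF3,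
    smul_neg, smul_zero, zero_add, add_zero, neg_zero] at E01 E02 E12
  have E01' : (2*(B*μ) - 2*(A*C)) • e 0 + (2*(C*lam) - 2*(A*B)) • e 1 +
      (1 + μ*τ + lam*τ - lam*μ - C*C - B*B + A*A) • e 2 = 0 := by
    rw [← E01]; module
  have E02' : (2*(B*C) - 2*(A*τ)) • e 0 +
      (-1 - μ*τ + lam*τ - lam*μ + C*C - B*B + A*A) • e 1 +
      (2*(A*B) - 2*(C*lam)) • e 2 = 0 := by
    rw [← E02]; module
  have E12' : (1 - μ*τ + lam*τ + lam*μ + C*C - B*B - A*A) • e 0 +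
      (2*(A*τ) - 2*(B*C)) • e 1 + (2*(B*μ) - 2*(A*C)) • e 2 = 0 := by
    rw [← E12]; module
  obtain ⟨q1, q2, q3⟩ := key _ _ _ E01'
  obtain ⟨q4, q5, -⟩ := key _ _ _ E02'
  obtain ⟨q6, -, -⟩ := key _ _ _ E12'
  have hx : μ*τ - C*C = -1 := by linarith
  have hy : lam*τ - B*B = -1 := by linarith
  have hz : lam*μ - A*A = -1 := by linarith
  have hB : B = 0 := by linear_combination B * hz - (lam/2) * q1 - (A/2) * q2
  subst hB
  have hlt : lam * τ = -1 := by linear_combination hy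
  have hlam : lam ≠ 0 := fun h => by rw [h, zero_mul] at hlt; norm_num at hlt
  have hτ : τ ≠ 0 := fun h => by rw [h, mul_zero] at hlt; norm_num at hlt
  have hC : C = 0 := by
    have hq : C * lam = 0 := by linarith
    rcases mul_eq_zero.mp hq with h | h
    · exact h
    · exact absurd h hlam
  have hA : A = 0 := by
    have hq : A * τ = 0 := by linarith
    rcases mul_eq_zero.mp hq with h | h
    · exact h
    · exact absurd h hτ
  subst hA; subst hC
  have hx' : μ * τ = -1 := by linear_combination hx
  have hz' : lam * μ = -1 := by linear_combination hz
  have hsq : (lam*μ*τ)^2 = -1 := by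
    linear_combination (μ*lam*τ^2) * hz' - (lam*τ) * hx' + hlt
  linarith [sq_nonneg (lam*μ*τ)]
end
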